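/- Let μ be any Möbius function for 𝒢. For all integers m, x with 0 < m ≤ x, μ(P_m, P_x) = (−1)^{x−m}. -/

import Mathlib

open SimpleGraph

/-- A finite simple graph, encoded by its number of vertices together with a
simple graph structure on `Fin n`. -/
def FinGraph : Type := Σ n : ℕ, SimpleGraph (Fin n)

namespace FinGraph

/-- The number of vertices of a graph. -/
def order (G : FinGraph) : ℕ := G.1

/-- Induced containment `H ⊴ G`: there is an injection of the vertices of `H`
into the vertices of `G` which preserves and reflects adjacency (equivalently,
`H` is isomorphic to an induced subgraph of `G`). -/
def Contains (H G : FinGraph) : Prop :=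
  ∃ f : Fin H.1 ↪ Fin G.1, ∀ a b : Fin H.1, G.2.Adj (f a) (f b) ↔ H.2.Adj a b

/-- Isomorphism of finite graphs. -/
def Iso (H G : FinGraph) : Prop := Nonempty (H.2 ≃g G.2)

/-- Package a simple graph on an arbitrary finite vertex type as a `FinGraph`. -/
noncomputable def of {V : Type} [Fintype V] (G : SimpleGraph V) : FinGraph :=
  ⟨Fintype.card V, G.comap ⇑(Fintype.equivFin V).symm⟩

end FinGraph

/-- `T` is a transversal of the interval `[H,G]`: every member lies in `[H,G]`,
distinct members are non-isomorphic, and every graph in `[H,G]` is isomorphic to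
a member of `T`. -/
def IsTransversal (H G : FinGraph) (T : Finset FinGraph) : Prop :=
  (∀ X ∈ T, H.Contains X ∧ X.Contains G) ∧
  (∀ X ∈ T, ∀ Y ∈ T, X ≠ Y → ¬ X.Iso Y) ∧
  (∀ X : FinGraph, H.Contains X → X.Contains G → ∃ Y ∈ T, X.Iso Y)

/-- `mu` is a Möbius function for the poset `𝒢` of all finite simple graphs up to
isomorphism, ordered by induced containment: it is isomorphism invariant, vanishes
on non-comparable pairs, and for every `H ⊴ G` the sum of `mu H ·` over any
transversal of `[H,G]` is `1` if `H ≅ G` and `0` otherwise. -/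
def IsMobius (mu : FinGraph → FinGraph → ℤ) : Prop :=
  (∀ H H' G G' : FinGraph, H.Iso H' → G.Iso G' → mu H G = mu H' G') ∧
  (∀ H G : FinGraph, ¬ H.Contains G → mu H G = 0) ∧
  (∀ H G : FinGraph, H.Contains G → ∀ T : Finset FinGraph, IsTransversal H G T →
    (H.Iso G → ∑ X ∈ T, mu H X = 1) ∧ (¬ H.Iso G → ∑ X ∈ T, mu H X = 0))

namespace MuAux
open FinGraph Finset

/-- "broken path" graph on `Fin n`: path with edges removed at positions in `B`. -/
def bp (n : ℕ) (B : Finset ℕ) : SimpleGraph (Fin n) where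
  Adj i j := (i.val + 1 = j.val ∧ i.val ∉ B) ∨ (j.val + 1 = i.val ∧ j.val ∉ B)
  symm := ⟨by intro i j h; tauto⟩
  loopless := ⟨by intro i h; rcases h with ⟨h,-⟩|⟨h,-⟩ <;> omega⟩

def bpG (n : ℕ) (B : Finset ℕ) : FinGraph := ⟨n, bp n B⟩
def Pg (k : ℕ) : FinGraph := bpG k ∅
def Cg (k : ℕ) : FinGraph := bpG (k+1) {k-1}

lemma bp_adj {n : ℕ} {B : Finset ℕ} {i j : Fin n} :
    (bp n B).Adj i j ↔ (i.val + 1 = j.val ∧ i.val ∉ B) ∨ (j.val + 1 = i.val ∧ j.val ∉ B) :=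
  Iff.rfl

lemma iso_refl (X : FinGraph) : X.Iso X := ⟨SimpleGraph.Iso.refl⟩
lemma iso_symm {X Y : FinGraph} (h : X.Iso Y) : Y.Iso X := ⟨h.some.symm⟩
lemma iso_trans {X Y Z : FinGraph} (h : X.Iso Y) (h' : Y.Iso Z) : X.Iso Z :=
  ⟨h'.some.comp h.some⟩

lemma iso_order {X Y : FinGraph} (h : X.Iso Y) : X.order = Y.order := by
  have e := h.some.toEquiv
  simpa [FinGraph.order] using Fintype.card_congr e

lemma contains_refl (X : FinGraph) : X.Contains X :=
  ⟨Function.Embedding.refl _, fun a b => Iff.rfl⟩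

lemma contains_trans {X Y Z : FinGraph} (h : X.Contains Y) (h' : Y.Contains Z) :
    X.Contains Z := by
  obtain ⟨f, hf⟩ := h; obtain ⟨g, hg⟩ := h'
  exact ⟨f.trans g, fun a b => (hg _ _).trans (hf a b)⟩

lemma contains_of_iso {X Y : FinGraph} (h : X.Iso Y) : X.Contains Y := by
  obtain ⟨e⟩ := h
  exact ⟨e.toEmbedding.toEmbedding, fun a b => e.map_adj_iff⟩

lemma contains_order_le {X Y : FinGraph} (h : X.Contains Y) : X.order ≤ Y.order := by
  obtain ⟨f, -⟩ := h
  simpa [FinGraph.order] using Fintype.card_le_of_embedding f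

lemma iso_of_contains_order_eq {X Y : FinGraph} (h : X.Contains Y)
    (ho : X.order = Y.order) : X.Iso Y := by
  obtain ⟨f, hf⟩ := h
  obtain ⟨n, GX⟩ := X; obtain ⟨n', GY⟩ := Y
  obtain rfl : n = n' := ho
  have hbij : Function.Bijective f := (Finite.injective_iff_bijective).1 f.injective
  exact ⟨⟨Equiv.ofBijective f hbij, by intro a b; exact hf a b⟩⟩

lemma iso_of_contains_contains {X Y : FinGraph} (h : X.Contains Y) (h' : Y.Contains X) :
    X.Iso Y :=
  iso_of_contains_order_eq h (le_antisymm (contains_order_le h) (contains_order_le h'))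

lemma contains_congr_left {X X' Y : FinGraph} (e : X.Iso X') (h : X.Contains Y) :
    X'.Contains Y := contains_trans (contains_of_iso (iso_symm e)) h

lemma contains_congr_right {X Y Y' : FinGraph} (e : Y.Iso Y') (h : X.Contains Y) :
    X.Contains Y' := contains_trans h (contains_of_iso e)

end MuAux

namespace MuAux
open FinGraph Finset

/-- There is a break-free window of length `k` in `bp n B`. -/
def Good (n : ℕ) (B : Finset ℕ) (k : ℕ) : Prop :=
  ∃ s, s + k ≤ n ∧ ∀ j, s ≤ j → j + 1 < s + k → j ∉ B

lemma good_mono {n : ℕ} {B : Finset ℕ} {k k' : ℕ} (h : Good n B k) (hk : k' ≤ k) :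
    Good n B k' := by
  obtain ⟨s, hs, hw⟩ := h
  exact ⟨s, by omega, fun j hj hj' => hw j hj (by omega)⟩

lemma contains_Pg_of_good {k n : ℕ} {B : Finset ℕ} (h : Good n B k) :
    (Pg k).Contains (bpG n B) := by
  obtain ⟨s, hs, hw⟩ := h
  refine ⟨(⟨fun i => (⟨s + i.val, by omega⟩ : Fin n), ?_⟩ : Fin k ↪ Fin n), ?_⟩
  · intro a b hab
    simp only [Fin.mk.injEq] at hab
    exact Fin.ext (by omega)
  · intro a b
    show (bp n B).Adj ⟨s + a.val, _⟩ ⟨s + b.val, _⟩ ↔ (bp k ∅).Adj a b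
    show (_ ∧ _) ∨ (_ ∧ _) ↔ (_ ∧ _) ∨ (_ ∧ _)
    simp only [Finset.notMem_empty, not_false_iff, and_true]
    constructor
    · rintro (⟨h1, h2⟩ | ⟨h1, h2⟩)
      · exact Or.inl (by omega)
      · exact Or.inr (by omega)
    · rintro (h1 | h1)
      · exact Or.inl ⟨by omega, hw _ (by omega) (by omega)⟩
      · exact Or.inr ⟨by omega, hw _ (by omega) (by omega)⟩

lemma good_of_contains_Pg {k n : ℕ} {B : Finset ℕ} (h : (Pg k).Contains (bpG n B)) :
    Good n B k := by
  obtain ⟨f, hf⟩ : ∃ f : Fin k ↪ Fin n,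
      ∀ a b : Fin k, (bp n B).Adj (f a) (f b) ↔ (bp k ∅).Adj a b := h
  match k, f, hf with
  | 0, f, hf => exact ⟨0, by omega, fun j hj hj' => by omega⟩
  | 1, f, hf =>
    refine ⟨(f ⟨0, by omega⟩).val, ?_, fun j hj hj' => by omega⟩
    have := (f ⟨0, by omega⟩).isLt; omega
  | (k+2), f, hf =>
    set F : ℕ → ℕ := fun i => if h : i < k + 2 then (f ⟨i, h⟩).val else 0 with hF
    have hFlt : ∀ i, i < k + 2 → F i < n := by
      intro i hi; simp only [hF, dif_pos hi]; exact (f ⟨i, hi⟩).isLt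
    have hinj : ∀ i j, i < k + 2 → j < k + 2 → F i = F j → i = j := by
      intro i j hi hj hij
      simp only [hF, dif_pos hi, dif_pos hj] at hij
      have := f.injective (Fin.ext hij : f ⟨i, hi⟩ = f ⟨j, hj⟩)
      exact congrArg Fin.val this
    have hadj : ∀ i, i + 1 < k + 2 →
        (F i + 1 = F (i+1) ∧ F i ∉ B) ∨ (F (i+1) + 1 = F i ∧ F (i+1) ∉ B) := by
      intro i hi
      have h2 := (hf ⟨i, by omega⟩ ⟨i+1, hi⟩).2 (Or.inl ⟨rfl, Finset.notMem_empty _⟩)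
      simpa only [hF, dif_pos (show i < k+2 by omega), dif_pos hi, bp_adj] using h2
    rcases hadj 0 (by omega) with ⟨h01, h0B⟩ | ⟨h01, h0B⟩
    · -- increasing
      have up : ∀ i, i + 1 < k + 2 → F (i+1) = F i + 1 ∧ F i ∉ B := by
        intro i
        induction i with
        | zero => intro _; exact ⟨h01.symm, h0B⟩
        | succ i ih =>
          intro hi
          have e1 := (ih (by omega)).1
          rcases hadj (i+1) hi with ⟨a1, a2⟩ | ⟨a1, a2⟩
          · exact ⟨a1.symm, a2⟩
          · exfalso
            rw [show i+1+1 = i+2 from rfl] at a1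
            have : F (i+2) = F i := by omega
            have := hinj _ _ (by omega) (by omega) this
            omega
      have hval : ∀ i, i < k + 2 → F i = F 0 + i := by
        intro i
        induction i with
        | zero => intro _; rfl
        | succ i ih =>
          intro hi
          have h1 := (up i (by omega)).1
          have h2 := ih (by omega)
          omega
      refine ⟨F 0, ?_, ?_⟩
      · have := hFlt (k+1) (by omega)
        rw [hval (k+1) (by omega)] at this; omega
      · intro j hj hj'
        have hiB := (up (j - F 0) (by omega)).2
        rwa [hval (j - F 0) (by omega), show F 0 + (j - F 0) = j by omega] at hiB
    · -- decreasing
      have down : ∀ i, i + 1 < k + 2 → F i = F (i+1) + 1 ∧ F (i+1) ∉ B := by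
        intro i
        induction i with
        | zero => intro _; exact ⟨h01.symm, h0B⟩
        | succ i ih =>
          intro hi
          have e1 := (ih (by omega)).1
          rcases hadj (i+1) hi with ⟨a1, a2⟩ | ⟨a1, a2⟩
          · exfalso
            rw [show i+1+1 = i+2 from rfl] at a1
            have : F (i+2) = F i := by omega
            have := hinj _ _ (by omega) (by omega) this
            omega
          · exact ⟨a1.symm, a2⟩
      have hval : ∀ i, i < k + 2 → F i + i = F 0 := by
        intro i
        induction i with
        | zero => intro _; rfl
        | succ i ih =>
          intro hi
          have h1 := (down i (by omega)).1
          have h2 := ih (by omega)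
          omega
      have hbig : k + 1 ≤ F 0 := by
        have := hval (k+1) (by omega); omega
      refine ⟨F 0 - (k + 1), ?_, ?_⟩
      · have := hFlt 0 (by omega); omega
      · intro j hj hj'
        have hiB := (down (F 0 - j - 1) (by omega)).2
        have hv := hval (F 0 - j) (by omega)
        rwa [show F 0 - j - 1 + 1 = F 0 - j by omega, show F (F 0 - j) = j by omega] at hiB

lemma good_self (n : ℕ) : Good n ∅ n := ⟨0, by omega, fun j _ _ => Finset.notMem_empty _⟩

lemma contains_Pg_Pg {m k : ℕ} (h : m ≤ k) : (Pg m).Contains (Pg k) :=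
  contains_Pg_of_good (good_mono (good_self k) h)

end MuAux

namespace MuAux
open FinGraph Finset

lemma contains_bpG_Pg {n N : ℕ} {B : Finset ℕ}
    (h : n + ((range (n-1)).filter (· ∈ B)).card ≤ N) :
    (bpG n B).Contains (Pg N) := by
  classical
  set c : ℕ → ℕ := fun i => ((range i).filter (· ∈ B)).card with hc
  have hstep : ∀ i, c (i+1) = c i + (if i ∈ B then 1 else 0) := by
    intro i
    simp only [hc, range_add_one, filter_insert]
    split
    · rw [Finset.card_insert_of_notMem (by simp)]
    · simp
  have hmono : ∀ i j, i ≤ j → c i ≤ c j := by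
    intro i j hij
    exact Finset.card_le_card (Finset.filter_subset_filter _ (Finset.range_subset_range.2 hij))
  have hbound : ∀ i, i < n → i + c i < N := by
    intro i hi
    have h1 : c i ≤ c (n-1) := hmono _ _ (by omega)
    have h2 : c (n-1) = ((range (n-1)).filter (· ∈ B)).card := rfl
    omega
  have key : ∀ u v : ℕ,
      ((u + c u + 1 = v + c v) ∨ (v + c v + 1 = u + c u)) ↔
        ((u + 1 = v ∧ u ∉ B) ∨ (v + 1 = u ∧ v ∉ B)) := by
    intro u v
    by_cases h1 : v = u + 1
    · subst h1
      have hs := hstep u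
      by_cases hB : u ∈ B
      · rw [if_pos hB] at hs
        constructor
        · rintro (h | h) <;> exact absurd h (by omega)
        · rintro (⟨h, hf⟩ | ⟨h, -⟩)
          · exact absurd hB hf
          · exact absurd h (by omega)
      · rw [if_neg hB] at hs
        constructor
        · rintro (h | h)
          · exact Or.inl ⟨by omega, hB⟩
          · exact absurd h (by omega)
        · rintro (⟨h, -⟩ | ⟨h, -⟩)
          · exact Or.inl (by omega)
          · exact absurd h (by omega)
    · by_cases h2 : u = v + 1
      · subst h2
        have hs := hstep v
        by_cases hB : v ∈ B
        · rw [if_pos hB] at hs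
          constructor
          · rintro (h | h) <;> exact absurd h (by omega)
          · rintro (⟨h, -⟩ | ⟨h, hf⟩)
            · exact absurd h (by omega)
            · exact absurd hB hf
        · rw [if_neg hB] at hs
          constructor
          · rintro (h | h)
            · exact absurd h (by omega)
            · exact Or.inr ⟨by omega, hB⟩
          · rintro (⟨h, -⟩ | ⟨h, -⟩)
            · exact absurd h (by omega)
            · exact Or.inr (by omega)
      · have hproof : ∀ w1 w2 : ℕ, w1 < w2 → w2 ≠ w1 + 1 → c w1 ≤ c w2 →
            ¬ (w1 + c w1 + 1 = w2 + c w2) := by intro w1 w2 q1 q2 q3; omega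
        rcases Nat.lt_trichotomy u v with hl | he | hl
        · have hm := hmono u v (le_of_lt hl)
          constructor
          · rintro (h | h) <;> exact absurd h (by omega)
          · rintro (⟨h, -⟩ | ⟨h, -⟩) <;> exact absurd h (by omega)
        · subst he
          constructor
          · rintro (h | h) <;> exact absurd h (by omega)
          · rintro (⟨h, -⟩ | ⟨h, -⟩) <;> exact absurd h (by omega)
        · have hm := hmono v u (le_of_lt hl)
          constructor
          · rintro (h | h) <;> exact absurd h (by omega)
          · rintro (⟨h, -⟩ | ⟨h, -⟩) <;> exact absurd h (by omega)
  refine ⟨(⟨fun i => (⟨i.val + c i.val, hbound _ i.isLt⟩ : Fin N), ?_⟩ : Fin n ↪ Fin N), ?_⟩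
  · intro a b hab
    simp only [Fin.mk.injEq] at hab
    rcases Nat.lt_trichotomy a.val b.val with hl | he | hl
    · have hx : a.val + c a.val < b.val + c b.val :=
        Nat.add_lt_add_of_lt_of_le hl (hmono _ _ (by omega))
      omega
    · exact Fin.ext he
    · have hx : b.val + c b.val < a.val + c a.val :=
        Nat.add_lt_add_of_lt_of_le hl (hmono _ _ (by omega))
      omega
  · intro a b
    show (bp N ∅).Adj ⟨a.val + c a.val, _⟩ ⟨b.val + c b.val, _⟩ ↔ (bp n B).Adj a b
    show ((a.val + c a.val + 1 = b.val + c b.val ∧ (a.val + c a.val) ∉ (∅ : Finset ℕ)) ∨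
        (b.val + c b.val + 1 = a.val + c a.val ∧ (b.val + c b.val) ∉ (∅ : Finset ℕ))) ↔
        ((a.val + 1 = b.val ∧ a.val ∉ B) ∨ (b.val + 1 = a.val ∧ b.val ∉ B))
    simp only [Finset.notMem_empty, not_false_iff, and_true]
    exact key a.val b.val

lemma good_le {n k : ℕ} {B : Finset ℕ} (h : Good n B k) : k ≤ n := by
  obtain ⟨s, hs, -⟩ := h; omega

/-- generic construction: embed `Cg k` into `bp n B` given a window of length `k`
starting at `s` and an extra vertex `v` non-adjacent to (and distinct from) the window. -/
lemma contains_Cg_aux {k n s v : ℕ} {B : Finset ℕ}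
    (hs : s + k ≤ n) (hw : ∀ j, s ≤ j → j + 1 < s + k → j ∉ B) (hv1 : v < n)
    (hv2 : ∀ i, i < k → (s + i + 1 = v → s + i ∈ B) ∧ (v + 1 = s + i → v ∈ B) ∧ v ≠ s + i) :
    (Cg k).Contains (bpG n B) := by
  have hlt : ∀ a : Fin (k+1), a.val < k → s + a.val < n := fun a ha => by omega
  set g : Fin (k+1) → Fin n := fun a =>
    if h : a.val < k then ⟨s + a.val, hlt a h⟩ else ⟨v, hv1⟩ with hg
  have hval : ∀ a : Fin (k+1), (g a).val = if a.val < k then s + a.val else v := by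
    intro a
    by_cases ha : a.val < k
    · rw [hg]; simp only [dif_pos ha, if_pos ha]
    · rw [hg]; simp only [dif_neg ha, if_neg ha]
  have hinj : Function.Injective g := by
    intro a b hab
    have h2 := congrArg Fin.val hab
    rw [hval a, hval b] at h2
    by_cases ha : a.val < k <;> by_cases hb : b.val < k
    · rw [if_pos ha, if_pos hb] at h2
      exact Fin.ext (by omega)
    · rw [if_pos ha, if_neg hb] at h2
      exact absurd h2.symm (hv2 _ ha).2.2
    · rw [if_neg ha, if_pos hb] at h2
      exact absurd h2 (hv2 _ hb).2.2
    · exact Fin.ext (by omega)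
  have hAdj : ∀ a b : Fin (k+1),
      (bp n B).Adj (g a) (g b) ↔ (bp (k+1) ({k-1} : Finset ℕ)).Adj a b := by
    intro a b
    show ((g a).val + 1 = (g b).val ∧ (g a).val ∉ B) ∨
        ((g b).val + 1 = (g a).val ∧ (g b).val ∉ B) ↔
        ((a.val + 1 = b.val ∧ a.val ∉ ({k-1} : Finset ℕ)) ∨
        (b.val + 1 = a.val ∧ b.val ∉ ({k-1} : Finset ℕ)))
    rw [hval a, hval b]
    simp only [Finset.mem_singleton]
    by_cases ha : a.val < k <;> by_cases hb : b.val < k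
    · rw [if_pos ha, if_pos hb]
      constructor
      · rintro (⟨h1, -⟩ | ⟨h1, -⟩)
        · exact Or.inl ⟨by omega, by omega⟩
        · exact Or.inr ⟨by omega, by omega⟩
      · rintro (⟨h1, -⟩ | ⟨h1, -⟩)
        · exact Or.inl ⟨by omega, hw _ (by omega) (by omega)⟩
        · exact Or.inr ⟨by omega, hw _ (by omega) (by omega)⟩
    · rw [if_pos ha, if_neg hb]
      have h2 := hv2 a.val ha
      constructor
      · rintro (⟨h1, hm⟩ | ⟨h1, hm⟩)
        · exact absurd (h2.1 h1) hm
        · exact absurd (h2.2.1 h1) hm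
      · rintro (⟨h1, hm⟩ | ⟨h1, -⟩)
        · exact absurd h1 (by omega)
        · exact absurd h1 (by omega)
    · rw [if_neg ha, if_pos hb]
      have h2 := hv2 b.val hb
      constructor
      · rintro (⟨h1, hm⟩ | ⟨h1, hm⟩)
        · exact absurd (h2.2.1 h1) hm
        · exact absurd (h2.1 h1) hm
      · rintro (⟨h1, -⟩ | ⟨h1, hm⟩)
        · exact absurd h1 (by omega)
        · exact absurd h1 (by omega)
    · rw [if_neg ha, if_neg hb]
      constructor
      · rintro (⟨h1, -⟩ | ⟨h1, -⟩) <;> exact absurd h1 (by omega)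
      · rintro (⟨h1, -⟩ | ⟨h1, -⟩) <;> exact absurd h1 (by omega)
  exact ⟨⟨g, hinj⟩, hAdj⟩

lemma contains_Cg_of_good_add_two {k n : ℕ} {B : Finset ℕ} (h : Good n B (k+2)) :
    (Cg k).Contains (bpG n B) := by
  obtain ⟨s, hs, hw⟩ := h
  refine contains_Cg_aux (s := s) (v := s + k + 1) (by omega)
    (fun j hj hj' => hw j hj (by omega)) (by omega) ?_
  intro i hi
  exact ⟨by omega, by omega, by omega⟩

lemma contains_Cg_of_good_nonempty {k n b : ℕ} {B : Finset ℕ} (h : Good n B k)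
    (hb : b ∈ B) (hbn : b + 1 < n) : (Cg k).Contains (bpG n B) := by
  obtain ⟨s, hs, hw⟩ := h
  by_cases hc : s + k ≤ b + 1
  · -- v = b + 1, to the right of the window
    refine contains_Cg_aux (s := s) (v := b + 1) hs hw (by omega) ?_
    intro i hi
    refine ⟨fun h1 => by rwa [show s + i = b by omega], fun h1 => by omega, by omega⟩
  · -- b + 1 < s + k ; b not in window interior, so b < s ; v = b
    have hbs : b < s := by
      by_contra hq
      exact hw b (by omega) (by omega) hb
    refine contains_Cg_aux (s := s) (v := b) hs hw (by omega) ?_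
    intro i hi
    exact ⟨fun h1 => by omega, fun h1 => hb, by omega⟩

lemma contains_Pg_Cg {m k : ℕ} (h : m ≤ k) : (Pg m).Contains (Cg k) := by
  refine contains_Pg_of_good ⟨0, by omega, fun j hj hj' => ?_⟩
  simp only [Finset.mem_singleton]
  omega

lemma not_contains_Pg_succ_Cg {k : ℕ} (hk : 1 ≤ k) : ¬ (Pg (k+1)).Contains (Cg k) := by
  intro h
  obtain ⟨s, hs, hw⟩ := good_of_contains_Pg h
  have : s = 0 := by omega
  subst this
  exact hw (k-1) (by omega) (by omega) (Finset.mem_singleton_self _)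

end MuAux

namespace MuAux
open FinGraph Finset

lemma classify {N : ℕ} (X : FinGraph) (h : X.Contains (Pg N)) :
    ∃ B', B' ⊆ range (X.1 - 1) ∧ X.Iso (bpG X.1 B') := by
  classical
  obtain ⟨nX, GX⟩ := X
  obtain ⟨f, hf⟩ : ∃ f : Fin nX ↪ Fin N, ∀ a b : Fin nX,
      (bp N ∅).Adj (f a) (f b) ↔ GX.Adj a b := h
  set s : Finset (Fin N) := Finset.univ.map f with hsdef
  have hcard : s.card = nX := by simp [hsdef]
  set g : Fin nX ≃o {x // x ∈ s} := s.orderIsoOfFin hcard with hgdef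
  set G' : ℕ → ℕ := fun i => if h : i < nX then ((g ⟨i, h⟩ : Fin N) : ℕ) else 0 with hG'
  have hGval : ∀ (i : Fin nX), G' i.val = ((g i : Fin N) : ℕ) := by
    intro i; rw [hG']; simp only [i.isLt, dif_pos, Fin.eta]
  have hgmono : ∀ i j : Fin nX, i < j → ((g i : Fin N) : ℕ) < ((g j : Fin N) : ℕ) := by
    intro i j hij
    exact g.strictMono hij
  set B' : Finset ℕ := (range (nX - 1)).filter (fun i => ¬ (G' (i+1) = G' i + 1)) with hB'
  have hBmem : ∀ u : ℕ, u ∈ B' ↔ u ∈ range (nX - 1) ∧ ¬ (G' (u+1) = G' u + 1) := by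
    intro u; rw [hB']; exact Finset.mem_filter
  refine ⟨B', Finset.filter_subset _ _, ?_⟩
  have core : ∀ i j : Fin nX,
      (bp nX B').Adj i j ↔ (bp N ∅).Adj (g i : Fin N) (g j : Fin N) := by
    intro i j
    show ((i.val + 1 = j.val ∧ i.val ∉ B') ∨ (j.val + 1 = i.val ∧ j.val ∉ B')) ↔
      ((((g i : Fin N) : ℕ) + 1 = ((g j : Fin N) : ℕ) ∧ ((g i : Fin N) : ℕ) ∉ (∅ : Finset ℕ)) ∨
       (((g j : Fin N) : ℕ) + 1 = ((g i : Fin N) : ℕ) ∧ ((g j : Fin N) : ℕ) ∉ (∅ : Finset ℕ)))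
    simp only [Finset.notMem_empty, not_false_iff, and_true]
    rcases Nat.lt_trichotomy i.val j.val with hl | he | hl
    · have hmono1 := hgmono i j (by exact hl)
      by_cases hcons : j.val = i.val + 1
      · have hgi := hGval i
        have hgj := hGval j
        constructor
        · rintro (⟨h1, h2⟩ | ⟨h1, -⟩)
          · rw [hBmem] at h2
            push_neg at h2
            have h3 := h2 (by rw [Finset.mem_range]; omega)
            rw [show i.val + 1 = j.val from h1, hgi, hgj] at h3
            exact Or.inl h3.symm
          · omega
        · rintro (h1 | h1)
          · refine Or.inl ⟨by omega, ?_⟩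
            rw [hBmem]
            push_neg
            intro hmem
            rw [show i.val + 1 = j.val from hcons.symm, hgi, hgj]
            omega
          · omega
      · have hij2 : i.val + 2 ≤ j.val := by omega
        have mid : Fin nX := ⟨i.val + 1, by omega⟩
        have hm1 := hgmono i ⟨i.val + 1, by omega⟩ (by simp [Fin.lt_def])
        have hm2 := hgmono ⟨i.val + 1, by omega⟩ j (by simp [Fin.lt_def]; omega)
        constructor
        · rintro (⟨h1, -⟩ | ⟨h1, -⟩) <;> exact absurd h1 (by omega)
        · rintro (h1 | h1) <;> exact absurd h1 (by omega)
    · have : i = j := Fin.ext he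
      subst this
      constructor
      · rintro (⟨h1, -⟩ | ⟨h1, -⟩) <;> exact absurd h1 (by omega)
      · rintro (h1 | h1) <;> exact absurd h1 (by omega)
    · have hmono1 := hgmono j i (by exact hl)
      by_cases hcons : i.val = j.val + 1
      · have hgi := hGval i
        have hgj := hGval j
        constructor
        · rintro (⟨h1, -⟩ | ⟨h1, h2⟩)
          · omega
          · rw [hBmem] at h2
            push_neg at h2
            have h3 := h2 (by rw [Finset.mem_range]; omega)
            rw [show j.val + 1 = i.val from h1, hgi, hgj] at h3
            exact Or.inr h3.symm
        · rintro (h1 | h1)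
          · omega
          · refine Or.inr ⟨by omega, ?_⟩
            rw [hBmem]
            push_neg
            intro hmem
            rw [show j.val + 1 = i.val from hcons.symm, hgi, hgj]
            omega
      · have hm1 := hgmono j ⟨j.val + 1, by omega⟩ (by simp [Fin.lt_def])
        have hm2 := hgmono ⟨j.val + 1, by omega⟩ i (by simp [Fin.lt_def]; omega)
        constructor
        · rintro (⟨h1, -⟩ | ⟨h1, -⟩) <;> exact absurd h1 (by omega)
        · rintro (h1 | h1) <;> exact absurd h1 (by omega)
  have hmem : ∀ a : Fin nX, f a ∈ s := by
    intro a
    rw [hsdef]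
    exact Finset.mem_map_of_mem f (Finset.mem_univ a)
  set e : Fin nX → Fin nX := fun a => g.symm ⟨f a, hmem a⟩ with he
  have hfe : ∀ a, (g (e a) : Fin N) = f a := by
    intro a
    rw [he]
    simp only [OrderIso.apply_symm_apply]
  have heinj : Function.Injective e := by
    intro a b hab
    apply f.injective
    have := congrArg (fun z => (g z : Fin N)) hab
    simpa only [hfe] using this
  have hebij : Function.Bijective e := Finite.injective_iff_bijective.1 heinj
  refine ⟨⟨Equiv.ofBijective e hebij, ?_⟩⟩
  intro a b
  show (bp nX B').Adj (e a) (e b) ↔ GX.Adj a b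
  rw [core (e a) (e b), hfe a, hfe b]
  exact hf a b

end MuAux

namespace MuAux
open FinGraph Finset

lemma exists_subtransversal (S : Finset FinGraph) :
    ∃ T, T ⊆ S ∧ (∀ X ∈ T, ∀ Y ∈ T, X ≠ Y → ¬ X.Iso Y) ∧ (∀ X ∈ S, ∃ Y ∈ T, X.Iso Y) := by
  classical
  induction S using Finset.strongInduction with
  | _ S ih =>
    rcases S.eq_empty_or_nonempty with rfl | ⟨a, ha⟩
    · exact ⟨∅, Finset.Subset.refl _, by simp, by simp⟩
    · have hss : S.filter (fun X => ¬ X.Iso a) ⊂ S :=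
        Finset.filter_ssubset.2 ⟨a, ha, by simp [iso_refl]⟩
      obtain ⟨T', hT'sub, hT'ni, hT'cov⟩ := ih _ hss
      refine ⟨insert a T', ?_, ?_, ?_⟩
      · intro x hx
        rcases Finset.mem_insert.1 hx with rfl | hx
        · exact ha
        · exact (Finset.filter_subset _ _) (hT'sub hx)
      · intro X hX Y hY hne
        rcases Finset.mem_insert.1 hX with rfl | hX2 <;>
          rcases Finset.mem_insert.1 hY with rfl | hY2
        · exact absurd rfl hne
        · intro hiso
          exact (Finset.mem_filter.1 (hT'sub hY2)).2 (iso_symm hiso)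
        · intro hiso
          exact (Finset.mem_filter.1 (hT'sub hX2)).2 hiso
        · exact hT'ni X hX2 Y hY2 hne
      · intro X hX
        by_cases hi : X.Iso a
        · exact ⟨a, Finset.mem_insert_self _ _, hi⟩
        · obtain ⟨Y, hY, hXY⟩ := hT'cov X (Finset.mem_filter.2 ⟨hX, hi⟩)
          exact ⟨Y, Finset.mem_insert_of_mem hY, hXY⟩

lemma mu_self {mu : FinGraph → FinGraph → ℤ} (hmu : IsMobius mu) (H : FinGraph) :
    mu H H = 1 := by
  have ht : IsTransversal H H {H} := by
    refine ⟨?_, ?_, ?_⟩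
    · intro X hX
      rw [Finset.mem_singleton] at hX
      subst hX
      exact ⟨contains_refl _, contains_refl _⟩
    · intro X hX Y hY hne
      rw [Finset.mem_singleton] at hX hY
      subst hX; subst hY
      exact absurd rfl hne
    · intro X h1 h2
      exact ⟨H, Finset.mem_singleton_self H, iso_of_contains_contains h2 h1⟩
  have := (hmu.2.2 H H (contains_refl H) {H} ht).1 (iso_refl H)
  simpa using this

lemma exists_interval_transversal {n : ℕ} {B : Finset ℕ} (H : FinGraph) :
    ∃ T, IsTransversal H (bpG n B) T ∧
      ∀ Y ∈ T, ∃ n' B2, n' ≤ n ∧ B2 ⊆ range (n' - 1) ∧ Y = bpG n' B2 := by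
  classical
  set G := bpG n B with hG
  set N := n + ((range (n-1)).filter (· ∈ B)).card with hN
  have hGP : G.Contains (Pg N) := contains_bpG_Pg (le_refl _)
  set S0 : Finset FinGraph := (range (n+1)).biUnion
    (fun n' => ((range (n'-1)).powerset).image (fun B2 => bpG n' B2)) with hS0
  set S : Finset FinGraph := S0.filter (fun Y => H.Contains Y ∧ Y.Contains G) with hS
  have hSmem : ∀ Y ∈ S, (H.Contains Y ∧ Y.Contains G) ∧
      ∃ n' B2, n' ≤ n ∧ B2 ⊆ range (n' - 1) ∧ Y = bpG n' B2 := by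
    intro Y hY
    rw [hS, Finset.mem_filter] at hY
    refine ⟨hY.2, ?_⟩
    have := hY.1
    rw [hS0, Finset.mem_biUnion] at this
    obtain ⟨n', hn', hmem⟩ := this
    rw [Finset.mem_image] at hmem
    obtain ⟨B2, hB2, rfl⟩ := hmem
    exact ⟨n', B2, by rw [Finset.mem_range] at hn'; omega,
      Finset.mem_powerset.1 hB2, rfl⟩
  have hcover : ∀ X : FinGraph, H.Contains X → X.Contains G → ∃ Y ∈ S, X.Iso Y := by
    intro X h1 h2
    obtain ⟨B2, hB2, hiso⟩ := classify X (contains_trans h2 hGP)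
    refine ⟨bpG X.1 B2, ?_, hiso⟩
    rw [hS, Finset.mem_filter]
    refine ⟨?_, contains_congr_right hiso h1, contains_congr_left hiso h2⟩
    rw [hS0, Finset.mem_biUnion]
    have hord : X.1 ≤ n := contains_order_le h2
    exact ⟨X.1, Finset.mem_range.2 (by omega),
      Finset.mem_image.2 ⟨B2, Finset.mem_powerset.2 hB2, rfl⟩⟩
  obtain ⟨T, hTS, hTni, hTcov⟩ := exists_subtransversal S
  refine ⟨T, ⟨?_, hTni, ?_⟩, ?_⟩
  · intro Y hY
    exact (hSmem Y (hTS hY)).1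
  · intro X h1 h2
    obtain ⟨Y, hY, hXY⟩ := hcover X h1 h2
    obtain ⟨Z, hZ, hYZ⟩ := hTcov Y hY
    exact ⟨Z, hZ, iso_trans hXY hYZ⟩
  · intro Y hY
    exact (hSmem Y (hTS hY)).2

open Classical in
noncomputable def maxRun (n : ℕ) (B : Finset ℕ) : ℕ := Nat.findGreatest (Good n B) n

lemma good_zero (n : ℕ) (B : Finset ℕ) : Good n B 0 := ⟨0, by omega, fun j h1 h2 => by omega⟩

open Classical in
lemma good_maxRun (n : ℕ) (B : Finset ℕ) : Good n B (maxRun n B) := by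
  rcases Nat.eq_zero_or_pos (maxRun n B) with h | h
  · rw [h]; exact good_zero n B
  · exact Nat.findGreatest_spec (P := Good n B) (by omega) (good_zero n B)

open Classical in
lemma le_maxRun {n k : ℕ} {B : Finset ℕ} (h : Good n B k) : k ≤ maxRun n B :=
  Nat.le_findGreatest (good_le h) h

lemma maxRun_le {n : ℕ} {B : Finset ℕ} : maxRun n B ≤ n := good_le (good_maxRun n B)

/-- reversal iso between the two one-isolated-vertex-plus-path graphs -/
lemma rev_iso {n : ℕ} (hn : 2 ≤ n) : (bpG n ({0} : Finset ℕ)).Iso (bpG n ({n-2} : Finset ℕ)) := by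
  refine ⟨⟨(Fin.revPerm : Equiv.Perm (Fin n)), ?_⟩⟩
  intro a b
  change Fin n at a b
  have ha : a.val < n := a.isLt
  have hb : b.val < n := b.isLt
  show ((((Fin.revPerm a : Fin n) : ℕ) + 1 = ((Fin.revPerm b : Fin n) : ℕ) ∧
        ((Fin.revPerm a : Fin n) : ℕ) ∉ ({n-2} : Finset ℕ)) ∨
      (((Fin.revPerm b : Fin n) : ℕ) + 1 = ((Fin.revPerm a : Fin n) : ℕ) ∧
        ((Fin.revPerm b : Fin n) : ℕ) ∉ ({n-2} : Finset ℕ))) ↔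
      ((a.val + 1 = b.val ∧ a.val ∉ ({0} : Finset ℕ)) ∨
      (b.val + 1 = a.val ∧ b.val ∉ ({0} : Finset ℕ)))
  simp only [Fin.revPerm_apply, Fin.val_rev, Finset.mem_singleton]
  omega

/-- `P_m ⊴ C_k` implies `m ≤ k` (for `k ≥ 1`). -/
lemma le_of_contains_Pg_Cg {m k : ℕ} (hk : 1 ≤ k) (h : (Pg m).Contains (Cg k)) : m ≤ k := by
  obtain ⟨s, hs, hw⟩ := good_of_contains_Pg h
  by_contra hmk
  have h1 : m = k + 1 ∧ s = 0 := by omega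
  obtain ⟨rfl, rfl⟩ := h1
  exact hw (k-1) (by omega) (by omega) (Finset.mem_singleton_self _)

end MuAux

namespace MuAux
open FinGraph Finset

noncomputable def gval (m n' : ℕ) (B' : Finset ℕ) : ℤ :=
  letI := Classical.propDecidable
  if B' = ∅ ∨ B' = ({0} : Finset ℕ) ∨ B' = ({n'-2} : Finset ℕ) then (-1)^(n'-m) else 0

theorem mu_bpG {mu : FinGraph → FinGraph → ℤ} (hmu : IsMobius mu) {m : ℕ} (hm : 0 < m) :
    ∀ n, ∀ B : Finset ℕ, B ⊆ range (n-1) → (Pg m).Contains (bpG n B) →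
      mu (Pg m) (bpG n B) = gval m n B := by
  intro n
  induction n using Nat.strong_induction_on with
  | _ n ih =>
  intro B hB hPm
  classical
  by_cases hiso : (Pg m).Iso (bpG n B)
  · -- the top is isomorphic to P_m itself
    have hord : m = n := iso_order hiso
    subst hord
    have hGood : Good m B m := good_of_contains_Pg (contains_of_iso hiso)
    have hBe : B = ∅ := by
      rw [Finset.eq_empty_iff_forall_notMem]
      intro j hj
      have hjr := Finset.mem_range.1 (hB hj)
      obtain ⟨s, hs, hw⟩ := hGood
      exact hw j (by omega) (by omega) hj
    have h1 : mu (Pg m) (bpG m B) = mu (Pg m) (Pg m) :=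
      hmu.1 _ _ _ _ (iso_refl _) (iso_symm hiso)
    rw [h1, mu_self hmu, gval]
    rw [if_pos (Or.inl hBe), Nat.sub_self, pow_zero]
  · -- main case
    obtain ⟨T, hT, hTform⟩ := exists_interval_transversal (n := n) (B := B) (Pg m)
    set f : FinGraph → ℤ := fun X => mu (Pg m) X with hf
    have hsum : ∑ X ∈ T, f X = 0 := (hmu.2.2 _ _ hPm T hT).2 hiso
    set M := maxRun n B with hMdef
    have hmM : m ≤ M := le_maxRun (good_of_contains_Pg hPm)
    have hMn : M ≤ n := maxRun_le
    have hmlt : m < n := by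
      rcases Nat.lt_or_ge m n with h | h
      · exact h
      · have h2 : m = n := le_antisymm (contains_order_le hPm) h
        exact absurd (iso_of_contains_order_eq hPm h2) hiso
    -- the pieces of the partition of T
    set T1 : Finset FinGraph := T.filter (fun Y => Y.order = n) with hT1
    set TT : Finset FinGraph := T.filter (fun Y => ¬ Y.order = n) with hTT
    set R2 : Finset FinGraph := TT.filter (fun Y => Y.Iso (Pg Y.order)) with hR2
    set TT2 : Finset FinGraph := TT.filter (fun Y => ¬ Y.Iso (Pg Y.order)) with hTT2
    set R3 : Finset FinGraph := TT2.filter (fun Y => Y.Iso (Cg (Y.order - 1))) with hR3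
    set R0 : Finset FinGraph := TT2.filter (fun Y => ¬ Y.Iso (Cg (Y.order - 1))) with hR0
    -- the top piece
    obtain ⟨Y0, hY0T, hY0iso⟩ := hT.2.2 (bpG n B) hPm (contains_refl _)
    have hY0ord : Y0.order = n := (iso_order hY0iso).symm
    have htop : T1 = {Y0} := by
      rw [hT1]
      apply Finset.eq_singleton_iff_unique_mem.2
      refine ⟨Finset.mem_filter.2 ⟨hY0T, hY0ord⟩, ?_⟩
      intro Y hY
      obtain ⟨hYT, hYord⟩ := Finset.mem_filter.1 hY
      have hYiso : Y.Iso (bpG n B) := iso_of_contains_order_eq (hT.1 Y hYT).2 hYord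
      have h3 : Y.Iso Y0 := iso_trans hYiso hY0iso
      by_contra hne
      exact hT.2.1 Y hYT Y0 hY0T hne h3
    have hsumtop : ∑ X ∈ T1, f X = mu (Pg m) (bpG n B) := by
      rw [htop, Finset.sum_singleton, hf]
      exact hmu.1 _ _ _ _ (iso_refl _) (iso_symm hY0iso)
    -- every small member has order < n and contains P_m
    have hordlt : ∀ Y ∈ TT, Y.order < n := by
      intro Y hY
      obtain ⟨hYT, hYord⟩ := Finset.mem_filter.1 hY
      exact lt_of_le_of_ne (contains_order_le (hT.1 Y hYT).2) hYord
    have hordge : ∀ Y ∈ T, m ≤ Y.order := by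
      intro Y hY
      exact contains_order_le (hT.1 Y hY).1
    -- ========== the path piece R2 ==========
    have hsumR2 : ∑ Y ∈ R2, f Y = ∑ k ∈ Icc m (min M (n-1)), (-1 : ℤ)^(k - m) := by
      refine Finset.sum_bij (fun Y _ => Y.order) ?_ ?_ ?_ ?_
      · -- maps into Icc
        intro Y hY
        obtain ⟨hYTT, hYP2⟩ := Finset.mem_filter.1 hY
        obtain ⟨hYT, -⟩ := Finset.mem_filter.1 hYTT
        show Y.order ∈ Icc m (min M (n-1))
        rw [Finset.mem_Icc]
        refine ⟨hordge Y hYT, le_min ?_ (by have := hordlt Y hYTT; omega)⟩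
        exact le_maxRun (good_of_contains_Pg (contains_congr_left hYP2 (hT.1 Y hYT).2))
      · -- injective
        intro Y1 h1 Y2 h2 heq
        obtain ⟨h1TT, h1P⟩ := Finset.mem_filter.1 h1
        obtain ⟨h1T, -⟩ := Finset.mem_filter.1 h1TT
        obtain ⟨h2TT, h2P⟩ := Finset.mem_filter.1 h2
        obtain ⟨h2T, -⟩ := Finset.mem_filter.1 h2TT
        have heq' : Y1.order = Y2.order := heq
        by_contra hne
        refine hT.2.1 Y1 h1T Y2 h2T hne (iso_trans h1P ?_)
        rw [heq']
        exact iso_symm h2P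
      · -- surjective
        intro k hk
        rw [Finset.mem_Icc] at hk
        have hkM : k ≤ M := le_trans hk.2 (min_le_left _ _)
        have hPgk : (Pg k).Contains (bpG n B) :=
          contains_Pg_of_good (good_mono (good_maxRun n B) hkM)
        obtain ⟨Y, hYT, hYiso⟩ := hT.2.2 (Pg k) (contains_Pg_Pg hk.1) hPgk
        have hord : Y.order = k := (iso_order hYiso).symm
        have hkn : k ≤ n - 1 := le_trans hk.2 (min_le_right _ _)
        have hmem : Y ∈ R2 := by
          rw [hR2]
          refine Finset.mem_filter.2 ⟨?_, ?_⟩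
          · rw [hTT]
            exact Finset.mem_filter.2 ⟨hYT, by omega⟩
          · rw [hord]
            exact iso_symm hYiso
        refine ⟨Y, hmem, ?_⟩
        show Y.order = k
        exact hord
      · -- value
        intro Y hY
        obtain ⟨hYTT, hYP2⟩ := Finset.mem_filter.1 hY
        obtain ⟨hYT, -⟩ := Finset.mem_filter.1 hYTT
        have h3 : f Y = mu (Pg m) (Pg Y.order) := hmu.1 _ _ _ _ (iso_refl _) hYP2
        have h4 := ih Y.order (hordlt Y hYTT) ∅ (by simp) (contains_Pg_Pg (hordge Y hYT))
        have h6 : mu (Pg m) (Pg Y.order) = gval m Y.order ∅ := h4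
        show f Y = (-1 : ℤ)^(Y.order - m)
        rw [h3, h6, gval, if_pos (Or.inl rfl)]
    -- ========== the path-plus-point piece R3 ==========
    have horder2 : ∀ Y ∈ TT2, 2 ≤ Y.order := by
      intro Y hY
      obtain ⟨hYTT, hYnP⟩ := Finset.mem_filter.1 hY
      obtain ⟨hYT, -⟩ := Finset.mem_filter.1 hYTT
      by_contra hlt
      have h1 : Y.order = m := by have := hordge Y hYT; omega
      have h2 : (Pg m).Iso Y := iso_of_contains_order_eq (hT.1 Y hYT).1 h1.symm
      refine hYnP ?_
      rw [h1]
      exact iso_symm h2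
    have hsumR3 : ∑ Y ∈ R3, f Y = ∑ k ∈ Icc m (min M (n-2)), (-1 : ℤ)^(k + 1 - m) := by
      refine Finset.sum_bij (fun Y _ => Y.order - 1) ?_ ?_ ?_ ?_
      · -- maps into Icc
        intro Y hY
        obtain ⟨hYTT2, hYP3⟩ := Finset.mem_filter.1 hY
        obtain ⟨hYTT, hYnP2⟩ := Finset.mem_filter.1 hYTT2
        obtain ⟨hYT, -⟩ := Finset.mem_filter.1 hYTT
        have h2o := horder2 Y hYTT2
        have hko : 1 ≤ Y.order - 1 := by omega
        have hCgG : (Cg (Y.order - 1)).Contains (bpG n B) :=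
          contains_congr_left hYP3 (hT.1 Y hYT).2
        have hmk : m ≤ Y.order - 1 :=
          le_of_contains_Pg_Cg hko (contains_congr_right hYP3 (hT.1 Y hYT).1)
        have hkM : Y.order - 1 ≤ M :=
          le_maxRun (good_of_contains_Pg
            (contains_trans (contains_Pg_Cg (le_refl (Y.order - 1))) hCgG))
        show Y.order - 1 ∈ Icc m (min M (n-2))
        rw [Finset.mem_Icc]
        exact ⟨hmk, le_min hkM (by have := hordlt Y hYTT; omega)⟩
      · -- injective
        intro Y1 h1 Y2 h2 heq
        obtain ⟨h1TT2, h1P⟩ := Finset.mem_filter.1 h1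
        obtain ⟨h2TT2, h2P⟩ := Finset.mem_filter.1 h2
        obtain ⟨h1TT, -⟩ := Finset.mem_filter.1 h1TT2
        obtain ⟨h2TT, -⟩ := Finset.mem_filter.1 h2TT2
        obtain ⟨h1T, -⟩ := Finset.mem_filter.1 h1TT
        obtain ⟨h2T, -⟩ := Finset.mem_filter.1 h2TT
        have heq' : Y1.order - 1 = Y2.order - 1 := heq
        have heq2 : Y1.order = Y2.order := by
          have := horder2 Y1 h1TT2
          have := horder2 Y2 h2TT2
          omega
        by_contra hne
        refine hT.2.1 Y1 h1T Y2 h2T hne (iso_trans h1P ?_)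
        rw [heq2]
        exact iso_symm h2P
      · -- surjective
        intro k hk
        rw [Finset.mem_Icc] at hk
        have hk1 : 1 ≤ k := le_trans hm hk.1
        have hkM : k ≤ M := le_trans hk.2 (min_le_left _ _)
        have hkn : k ≤ n - 2 := le_trans hk.2 (min_le_right _ _)
        have hCgk : (Cg k).Contains (bpG n B) := by
          by_cases hBe : B = ∅
          · refine contains_Cg_of_good_add_two ⟨0, by omega, ?_⟩
            intro j hj hj'
            rw [hBe]
            exact Finset.notMem_empty j
          · obtain ⟨b, hb⟩ := Finset.nonempty_iff_ne_empty.2 hBe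
            have hbn : b + 1 < n := by
              have := Finset.mem_range.1 (hB hb)
              omega
            exact contains_Cg_of_good_nonempty (good_mono (good_maxRun n B) hkM) hb hbn
        obtain ⟨Y, hYT, hYiso⟩ := hT.2.2 (Cg k) (contains_Pg_Cg hk.1) hCgk
        have hord : Y.order = k + 1 := (iso_order hYiso).symm
        have hnP2 : ¬ Y.Iso (Pg Y.order) := by
          intro hP2
          have h5 : (Pg (k+1)).Iso Y := by
            rw [hord] at hP2
            exact iso_symm hP2
          have h6 : (Pg (k+1)).Contains (Cg k) :=
            contains_congr_right (iso_symm hYiso) (contains_of_iso h5)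
          exact not_contains_Pg_succ_Cg hk1 h6
        have hmem : Y ∈ R3 := by
          rw [hR3]
          refine Finset.mem_filter.2 ⟨?_, ?_⟩
          · rw [hTT2]
            refine Finset.mem_filter.2 ⟨?_, hnP2⟩
            rw [hTT]
            exact Finset.mem_filter.2 ⟨hYT, by omega⟩
          · rw [hord]
            simpa using iso_symm hYiso
        refine ⟨Y, hmem, ?_⟩
        show Y.order - 1 = k
        omega
      · -- value
        intro Y hY
        obtain ⟨hYTT2, hYP3⟩ := Finset.mem_filter.1 hY
        obtain ⟨hYTT, hYnP2⟩ := Finset.mem_filter.1 hYTT2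
        obtain ⟨hYT, -⟩ := Finset.mem_filter.1 hYTT
        have h2o := horder2 Y hYTT2
        have hko : 1 ≤ Y.order - 1 := by omega
        have hmk : m ≤ Y.order - 1 :=
          le_of_contains_Pg_Cg hko (contains_congr_right hYP3 (hT.1 Y hYT).1)
        have h3 : f Y = mu (Pg m) (Cg (Y.order - 1)) := hmu.1 _ _ _ _ (iso_refl _) hYP3
        have h4 := ih (Y.order - 1 + 1) (by have := hordlt Y hYTT; omega)
          ({Y.order - 1 - 1} : Finset ℕ)
          (by
            rw [Finset.singleton_subset_iff, Finset.mem_range]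
            omega)
          (contains_Pg_Cg hmk)
        have h6 : mu (Pg m) (Cg (Y.order - 1))
            = gval m (Y.order - 1 + 1) ({Y.order - 1 - 1} : Finset ℕ) := h4
        show f Y = (-1 : ℤ)^(Y.order - 1 + 1 - m)
        rw [h3, h6, gval, if_pos (Or.inr (Or.inr (by rw [show Y.order - 1 + 1 - 2 = Y.order - 1 - 1 from by omega])))]
    -- ========== the zero piece R0 ==========
    have hsumR0 : ∑ Y ∈ R0, f Y = 0 := by
      refine Finset.sum_eq_zero ?_
      intro Y hY
      obtain ⟨hYTT2, hYnP3⟩ := Finset.mem_filter.1 hY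
      obtain ⟨hYTT, hYnP2⟩ := Finset.mem_filter.1 hYTT2
      obtain ⟨hYT, -⟩ := Finset.mem_filter.1 hYTT
      obtain ⟨n', B2, hn', hB2, rfl⟩ := hTform Y hYT
      have hlt : n' < n := hordlt _ hYTT
      have h4 := ih n' hlt B2 hB2 (hT.1 _ hYT).1
      show mu (Pg m) (bpG n' B2) = 0
      rw [h4, gval, if_neg]
      rintro (rfl | rfl | hE)
      · exact hYnP2 (iso_refl _)
      · -- B2 = {0}
        have hn2 : 2 ≤ n' := by
          have := Finset.mem_range.1 (hB2 (Finset.mem_singleton_self 0))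
          omega
        obtain ⟨k, rfl⟩ : ∃ k, n' = k + 2 := ⟨n' - 2, by omega⟩
        refine hYnP3 ?_
        have h6 : (bpG (k+2) ({0} : Finset ℕ)).Iso (bpG (k+2) ({k} : Finset ℕ)) := by
          have := rev_iso (n := k+2) (by omega)
          simpa using this
        exact h6
      · -- B2 = {n'-2}
        have hn2 : 2 ≤ n' := by
          have := Finset.mem_range.1 (hB2 (by rw [hE]; exact Finset.mem_singleton_self _))
          omega
        obtain ⟨k, rfl⟩ : ∃ k, n' = k + 2 := ⟨n' - 2, by omega⟩
        refine hYnP3 ?_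
        rw [hE]
        simp only [Nat.add_sub_cancel]
        exact iso_refl _
    -- ========== assembling ==========
    have hsplit1 : ∑ X ∈ T1, f X + ∑ X ∈ TT, f X = ∑ X ∈ T, f X := by
      rw [hT1, hTT]
      exact Finset.sum_filter_add_sum_filter_not T _ f
    have hsplit2 : ∑ X ∈ R2, f X + ∑ X ∈ TT2, f X = ∑ X ∈ TT, f X := by
      rw [hR2, hTT2]
      exact Finset.sum_filter_add_sum_filter_not TT _ f
    have hsplit3 : ∑ X ∈ R3, f X + ∑ X ∈ R0, f X = ∑ X ∈ TT2, f X := by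
      rw [hR3, hR0]
      exact Finset.sum_filter_add_sum_filter_not TT2 _ f
    have hmain : mu (Pg m) (bpG n B) + ∑ k ∈ Icc m (min M (n-1)), (-1 : ℤ)^(k - m)
        + ∑ k ∈ Icc m (min M (n-2)), (-1 : ℤ)^(k + 1 - m) = 0 := by
      rw [← hsumtop, ← hsumR2, ← hsumR3]
      rw [← hsum, ← hsplit1, ← hsplit2, ← hsplit3]
      rw [hsumR0]
      ring
    have hnegsum : ∀ r : ℕ, ∑ k ∈ Icc m r, (-1 : ℤ)^(k + 1 - m)
        = - ∑ k ∈ Icc m r, (-1 : ℤ)^(k - m) := by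
      intro r
      rw [← Finset.sum_neg_distrib]
      refine Finset.sum_congr rfl ?_
      intro k hk
      have hmk := (Finset.mem_Icc.1 hk).1
      rw [show k + 1 - m = (k - m) + 1 by omega, pow_succ]
      ring
    by_cases hBcase : B = ∅ ∨ B = ({0} : Finset ℕ) ∨ B = ({n-2} : Finset ℕ)
    · -- top is a path or a path plus one point
      have hMbig : n - 1 ≤ M := by
        rcases hBcase with rfl | rfl | rfl
        · exact le_trans (by omega) (le_maxRun (good_self n))
        · refine le_maxRun ⟨1, by omega, ?_⟩
          intro j hj hj'
          rw [Finset.mem_singleton]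
          omega
        · refine le_maxRun ⟨0, by omega, ?_⟩
          intro j hj hj'
          rw [Finset.mem_singleton]
          omega
      have hp : min M (n-1) = n - 1 := min_eq_right hMbig
      have hq : min M (n-2) = n - 2 := min_eq_right (by omega)
      have hicc : Icc m (n-1) = insert (n-1) (Icc m (n-2)) := by
        ext j
        simp only [Finset.mem_Icc, Finset.mem_insert]
        omega
      have hnm : (n - 1) ∉ Icc m (n-2) := by
        rw [Finset.mem_Icc]
        omega
      rw [hp, hq, hicc, Finset.sum_insert hnm, hnegsum] at hmain
      have hfin : mu (Pg m) (bpG n B) = - (-1 : ℤ)^(n - 1 - m) := by linarith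
      rw [hfin, gval, if_pos hBcase, show n - m = (n - 1 - m) + 1 by omega, pow_succ]
      ring
    · -- generic case
      have hMsmall : M ≤ n - 2 := by
        by_contra hc
        have hGM : Good n B (n-1) := good_mono (good_maxRun n B) (by omega)
        obtain ⟨s, hs, hw⟩ := hGM
        have hs1 : s = 0 ∨ s = 1 := by omega
        rcases hs1 with rfl | rfl
        · have hsub : B ⊆ ({n-2} : Finset ℕ) := by
            intro j hj
            have hjr := Finset.mem_range.1 (hB hj)
            rw [Finset.mem_singleton]
            by_contra hne
            exact hw j (by omega) (by omega) hj
          rcases Finset.subset_singleton_iff.1 hsub with rfl | rfl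
          · exact hBcase (Or.inl rfl)
          · exact hBcase (Or.inr (Or.inr rfl))
        · have hsub : B ⊆ ({0} : Finset ℕ) := by
            intro j hj
            have hjr := Finset.mem_range.1 (hB hj)
            rw [Finset.mem_singleton]
            by_contra hne
            exact hw j (by omega) (by omega) hj
          rcases Finset.subset_singleton_iff.1 hsub with rfl | rfl
          · exact hBcase (Or.inl rfl)
          · exact hBcase (Or.inr (Or.inl rfl))
      have hp : min M (n-1) = M := min_eq_left (by omega)
      have hq : min M (n-2) = M := min_eq_left hMsmall
      rw [hp, hq, hnegsum] at hmain
      have hfin : mu (Pg m) (bpG n B) = 0 := by linarith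
      rw [hfin, gval, if_neg hBcase]

end MuAux

namespace MuAux

lemma pathGraph_iso (k : ℕ) :
    FinGraph.Iso (⟨k, SimpleGraph.pathGraph k⟩ : FinGraph) (Pg k) := by
  refine ⟨⟨Equiv.refl (Fin k), ?_⟩⟩
  intro a b
  show (bp k ∅).Adj a b ↔ (SimpleGraph.pathGraph k).Adj a b
  rw [SimpleGraph.pathGraph_adj]
  show ((a.val + 1 = b.val ∧ a.val ∉ (∅ : Finset ℕ)) ∨
      (b.val + 1 = a.val ∧ b.val ∉ (∅ : Finset ℕ))) ↔ _
  simp only [Finset.notMem_empty, not_false_iff, and_true]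

end MuAux

/-- `μ(P_m, P_x) = (-1)^(x-m)` for `0 < m ≤ x`. -/
theorem mobius_path_path (mu : FinGraph → FinGraph → ℤ) (hmu : IsMobius mu)
    (m x : ℕ) (hm : 0 < m) (hx : m ≤ x) :
    mu ⟨m, SimpleGraph.pathGraph m⟩ ⟨x, SimpleGraph.pathGraph x⟩ = (-1) ^ (x - m) := by
  have h1 : mu ⟨m, SimpleGraph.pathGraph m⟩ ⟨x, SimpleGraph.pathGraph x⟩
      = mu (MuAux.Pg m) (MuAux.Pg x) :=
    hmu.1 _ _ _ _ (MuAux.pathGraph_iso m) (MuAux.pathGraph_iso x)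
  have h2 : mu (MuAux.Pg m) (MuAux.Pg x) = MuAux.gval m x ∅ :=
    MuAux.mu_bpG hmu hm x ∅ (by simp) (MuAux.contains_Pg_Pg hx)
  rw [h1, h2, MuAux.gval, if_pos (Or.inl rfl)]
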